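/- arXiv:1505.02212 — 4 statements merged into one kernel-verified Lean document; each statement's English description precedes it below -/
import Mathlib

section
/- Let R : [0,1] → Set ℝ assign to each x a nonempty closed interval R(x), and define f(x) = max R(x) and, for y ∈ ℝ, g(y) = min of the smallest closed interval containing {x ∈ [0,1] : y ∈ R(x)} (assumed nonempty where g is applied). If f is strictly increasing on [0,1], then f and g are inverses: for every x ∈ [0,1], g(f(x)) = x. -/
open Set

/-- If `R` assigns to each `x ∈ [0,1]` a nonempty closed (compact) interval,
`f x = max R x`, and `g y = min` of the smallest closed interval containing
`{x ∈ [0,1] : y ∈ R x}` (i.e. `g y = sInf {x ∈ [0,1] : y ∈ R x}`), and `f` is strictly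
increasing on `[0,1]`, then `g (f x) = x` for every `x ∈ [0,1]`. -/
theorem stmt0 (R : ℝ → Set ℝ)
    (hR : ∀ x ∈ Set.Icc (0:ℝ) 1, ∃ a b : ℝ, a ≤ b ∧ R x = Set.Icc a b)
    (f g : ℝ → ℝ)
    (hf : ∀ x, f x = sSup (R x))
    (hg : ∀ y, g y = sInf {x | x ∈ Set.Icc (0:ℝ) 1 ∧ y ∈ R x})
    (hmono : StrictMonoOn f (Set.Icc (0:ℝ) 1)) :
    ∀ x ∈ Set.Icc (0:ℝ) 1, g (f x) = x := by
  intro x hx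
  obtain ⟨a, b, hab, hRx⟩ := hR x hx
  have hfx : f x = b := by rw [hf, hRx, csSup_Icc hab]
  have hxS : x ∈ {x' | x' ∈ Set.Icc (0:ℝ) 1 ∧ f x ∈ R x'} := by
    refine ⟨hx, ?_⟩
    rw [hfx, hRx]; exact ⟨hab, le_refl b⟩
  have hlb : ∀ x' ∈ {x' | x' ∈ Set.Icc (0:ℝ) 1 ∧ f x ∈ R x'}, x ≤ x' := by
    rintro x' ⟨hx', hmem⟩
    by_contra h
    push_neg at h
    obtain ⟨a', b', hab', hRx'⟩ := hR x' hx'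
    have h1 : f x ≤ f x' := by
      rw [hRx'] at hmem
      rw [hf x', hRx', csSup_Icc hab']
      exact hmem.2
    exact absurd (hmono hx' hx h) (not_lt.mpr h1)
  rw [hg]
  exact le_antisymm (csInf_le ⟨x, hlb⟩ hxS) (le_csInf ⟨x, hxS⟩ hlb)
end

section
/- Let R : [0,1] → Set ℝ assign to each x a nonempty compact interval, and suppose x ↦ max R(x) is strictly increasing. Define the interpretable interval I(y) as the smallest closed interval containing {x ∈ [0,1] : y ∈ R(x)}. Then for any x₀ ∈ [0,1], setting y = max R(x₀), we have min I(y) = x₀. -/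
open Set

/-- If `R` assigns to each `x ∈ [0,1]` a nonempty compact interval and
`x ↦ max R x` is strictly increasing on `[0,1]`, then for any `x₀ ∈ [0,1]`, setting
`y = max R x₀`, the left endpoint of the interpretable interval
`I(y)` (the smallest closed interval containing `{x ∈ [0,1] : y ∈ R x}`, so its min is
`sInf {x ∈ [0,1] : y ∈ R x}`) equals `x₀`. -/
theorem stmt1 (R : ℝ → Set ℝ)
    (hR : ∀ x ∈ Set.Icc (0:ℝ) 1, ∃ a b : ℝ, a ≤ b ∧ R x = Set.Icc a b)
    (hmono : StrictMonoOn (fun x => sSup (R x)) (Set.Icc (0:ℝ) 1)) :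
    ∀ x₀ ∈ Set.Icc (0:ℝ) 1,
      sInf {x | x ∈ Set.Icc (0:ℝ) 1 ∧ sSup (R x₀) ∈ R x} = x₀ := by
  intro x₀ hx₀
  set S : Set ℝ := {x | x ∈ Set.Icc (0:ℝ) 1 ∧ sSup (R x₀) ∈ R x} with hS
  have hx₀S : x₀ ∈ S := by
    obtain ⟨a, b, hab, hRx⟩ := hR x₀ hx₀
    refine ⟨hx₀, ?_⟩
    rw [hRx, csSup_Icc hab]
    exact Set.right_mem_Icc.mpr hab
  have hlb : ∀ x ∈ S, x₀ ≤ x := by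
    intro x hx
    by_contra h
    push_neg at h
    have hlt : sSup (R x) < sSup (R x₀) := hmono hx.1 hx₀ h
    obtain ⟨a, b, hab, hRx⟩ := hR x hx.1
    have := hx.2
    rw [hRx] at this
    rw [hRx, csSup_Icc hab] at hlt
    exact absurd this.2 (not_le.mpr hlt)
  exact le_antisymm (csInf_le ⟨x₀, hlb⟩ hx₀S) (le_csInf ⟨x₀, hx₀S⟩ hlb)
end

section
/- Let φ : Q → [0,1] be a population quantity and Φ : Q → [0,1] a property on a set Q of distributions. Define the large-sample reliable interval Rel(x) as the smallest closed interval containing φ(Φ⁻¹({x})), and the interpretable interval I(y) as the smallest closed interval containing {x : y ∈ Rel(x)}. If φ = h ∘ Φ for some strictly increasing function h : [0,1] → [0,1], then every interpretable interval is a singleton: for every y in the range of φ, I(y) has diameter 0. -/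
open Set

/-- perfect interpretability from monotone dependence on Φ in the
large-sample limit: with `φ, Φ : Q → [0,1]`, `Φ` surjective onto `[0,1]`,
`Rel x = Icc (sInf (φ '' Φ⁻¹ {x})) (sSup (φ '' Φ⁻¹ {x}))` (the smallest closed interval
containing `φ(Φ⁻¹({x}))`), and `I(y)` the smallest closed interval containing
`S y = {x ∈ [0,1] : y ∈ Rel x}`, if `φ = h ∘ Φ` for a strictly increasing
`h : [0,1] → [0,1]`, then every interpretable interval at a `y` in the range of `φ` has
diameter 0, i.e. `sSup (S y) = sInf (S y)`. -/
theorem stmt9 {Q : Type*} (φ Φ : Q → ℝ)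
    (hφ : ∀ Z, φ Z ∈ Set.Icc (0:ℝ) 1) (hΦ : ∀ Z, Φ Z ∈ Set.Icc (0:ℝ) 1)
    (hsurj : ∀ x ∈ Set.Icc (0:ℝ) 1, ∃ Z, Φ Z = x)
    (h : ℝ → ℝ) (hmono : StrictMonoOn h (Set.Icc (0:ℝ) 1))
    (hmaps : ∀ x ∈ Set.Icc (0:ℝ) 1, h x ∈ Set.Icc (0:ℝ) 1)
    (hcomp : ∀ Z, φ Z = h (Φ Z)) :
    ∀ y ∈ Set.range φ,
      sSup {x | x ∈ Set.Icc (0:ℝ) 1 ∧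
          y ∈ Set.Icc (sInf (φ '' (Φ ⁻¹' {x}))) (sSup (φ '' (Φ ⁻¹' {x})))} =
      sInf {x | x ∈ Set.Icc (0:ℝ) 1 ∧
          y ∈ Set.Icc (sInf (φ '' (Φ ⁻¹' {x}))) (sSup (φ '' (Φ ⁻¹' {x})))} := by
  intro y hy
  obtain ⟨Z₀, hZ₀⟩ := hy
  have himg : ∀ x ∈ Set.Icc (0:ℝ) 1, φ '' (Φ ⁻¹' {x}) = {h x} := by
    intro x hx
    ext z
    constructor
    · rintro ⟨Z, hZ, rfl⟩
      simp only [Set.mem_preimage, Set.mem_singleton_iff] at hZ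
      simp [hcomp Z, hZ]
    · rintro rfl
      obtain ⟨Z, hZ⟩ := hsurj x hx
      exact ⟨Z, by simp [hZ], by simp [hcomp Z, hZ]⟩
  have hset : {x | x ∈ Set.Icc (0:ℝ) 1 ∧
      y ∈ Set.Icc (sInf (φ '' (Φ ⁻¹' {x}))) (sSup (φ '' (Φ ⁻¹' {x})))} = {Φ Z₀} := by
    ext x
    simp only [Set.mem_setOf_eq, Set.mem_singleton_iff]
    constructor
    · rintro ⟨hx, hy⟩
      rw [himg x hx] at hy
      simp only [csInf_singleton, csSup_singleton, Set.mem_Icc] at hy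
      have : y = h x := le_antisymm hy.2 hy.1
      have : h (Φ Z₀) = h x := by rw [← this, ← hZ₀, hcomp]
      exact (hmono.injOn (hΦ Z₀) hx this).symm
    · rintro rfl
      refine ⟨hΦ Z₀, ?_⟩
      rw [himg _ (hΦ Z₀)]
      simp [← hcomp Z₀, hZ₀]
  rw [hset, csSup_singleton, csInf_singleton]
end

section
/- Let φ : Q → [0,1] and Φ : Q → [0,1] with Φ surjective, and define Rel(x) and I(y) as in the large-sample limit (Rel(x) the smallest closed interval containing φ(Φ⁻¹({x})), I(y) the smallest closed interval containing {x : y ∈ Rel(x)}). If every interpretable interval I(y) for y in the range of φ is a singleton, then φ(Z) determines Φ(Z): for all Z₁, Z₂ ∈ Q, φ(Z₁) = φ(Z₂) implies Φ(Z₁) = Φ(Z₂). -/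
open Set

/-- converse characterization of perfect equitability in the large-sample
limit: with `φ, Φ : Q → [0,1]`, `Φ` surjective onto `[0,1]`,
`Rel x = Icc (sInf (φ '' Φ⁻¹ {x})) (sSup (φ '' Φ⁻¹ {x}))` and
`S y = {x ∈ [0,1] : y ∈ Rel x}`, if for every `y` in the range of `φ` the interpretable
interval is a singleton (`sSup (S y) = sInf (S y)`), then `φ(Z)` determines `Φ(Z)`. -/
theorem stmt10 {Q : Type*} (φ Φ : Q → ℝ)
    (hφ : ∀ Z, φ Z ∈ Set.Icc (0:ℝ) 1) (hΦ : ∀ Z, Φ Z ∈ Set.Icc (0:ℝ) 1)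
    (hsurj : ∀ x ∈ Set.Icc (0:ℝ) 1, ∃ Z, Φ Z = x)
    (hsing : ∀ y ∈ Set.range φ,
      sSup {x | x ∈ Set.Icc (0:ℝ) 1 ∧
          y ∈ Set.Icc (sInf (φ '' (Φ ⁻¹' {x}))) (sSup (φ '' (Φ ⁻¹' {x})))} =
      sInf {x | x ∈ Set.Icc (0:ℝ) 1 ∧
          y ∈ Set.Icc (sInf (φ '' (Φ ⁻¹' {x}))) (sSup (φ '' (Φ ⁻¹' {x})))}) :
    ∀ Z₁ Z₂ : Q, φ Z₁ = φ Z₂ → Φ Z₁ = Φ Z₂ := by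
  intro Z₁ Z₂ heq
  set S : ℝ → Set ℝ := fun y => {x | x ∈ Set.Icc (0:ℝ) 1 ∧
      y ∈ Set.Icc (sInf (φ '' (Φ ⁻¹' {x}))) (sSup (φ '' (Φ ⁻¹' {x})))} with hS
  have hmem : ∀ Z : Q, Φ Z ∈ S (φ Z) := by
    intro Z
    refine ⟨hΦ Z, ?_, ?_⟩
    · exact csInf_le ⟨0, fun a ⟨z, hz, hza⟩ => hza ▸ (hφ z).1⟩ ⟨Z, rfl, rfl⟩
    · exact le_csSup ⟨1, fun a ⟨z, hz, hza⟩ => hza ▸ (hφ z).2⟩ ⟨Z, rfl, rfl⟩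
  have hsub : ∀ y, S y ⊆ Set.Icc (0:ℝ) 1 := fun y x hx => hx.1
  have key : ∀ Z : Q, Φ Z = sInf (S (φ Z)) := by
    intro Z
    have h1 : sInf (S (φ Z)) ≤ Φ Z :=
      csInf_le ⟨0, fun a ha => (hsub _ ha).1⟩ (hmem Z)
    have h2 : Φ Z ≤ sSup (S (φ Z)) :=
      le_csSup ⟨1, fun a ha => (hsub _ ha).2⟩ (hmem Z)
    have h3 : sSup (S (φ Z)) = sInf (S (φ Z)) := hsing (φ Z) ⟨Z, rfl⟩
    exact le_antisymm (h3 ▸ h2) h1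
  rw [key Z₁, key Z₂, heq]
end
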